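/- arXiv:2501.11860 — 4 statements merged into one kernel-verified Lean document; each statement's English description precedes it below -/
import Mathlib

section
/- For all real x > 0, the Gamma function satisfies sqrt(2π) · x^(x+1/2) · e^(−x) · e^(1/(1+12x)) ≤ Γ(x+1) ≤ sqrt(2π) · x^(x+1/2) · e^(−x) · e^(1/(12x)). -/
open Real

open Filter Topology


noncomputable def gg (t : ℝ) : ℝ := (t + 1/2) * Real.log (1 + 1/t) - 1

lemma gg_hasSum {t : ℝ} (ht : 0 < t) :
    HasSum (fun k : ℕ => (1/(2*t+1)) ^ (2*k+2) / (2*(k:ℝ)+3)) (gg t) := by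
  set y : ℝ := 1/(2*t+1) with hy
  have h2t : 0 < 2*t+1 := by linarith
  have hy0 : 0 < y := by positivity
  have hy1 : y < 1 := by
    rw [hy, div_lt_one h2t]; linarith
  have hya : |y| < 1 := by rw [abs_of_pos hy0]; exact hy1
  have hya' : |(-y)| < 1 := by rwa [abs_neg]
  have h1 := Real.hasSum_pow_div_log_of_abs_lt_one hya
  have h2 := Real.hasSum_pow_div_log_of_abs_lt_one hya'
  have h3 := h1.sub h2
  -- restrict to even indices
  have he : Function.Injective (fun k : ℕ => 2*k) := fun a b h => by dsimp at h; omega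
  have h4 : HasSum (fun k : ℕ => 2 * y ^ (2*k + 1) / (2*(k:ℝ)+1))
      (Real.log (1 + y) - Real.log (1 - y)) := by
    have hvan : ∀ n ∉ Set.range (fun k : ℕ => 2*k),
        y ^ (n + 1) / ((n:ℝ) + 1) - (-y) ^ (n + 1) / ((n:ℝ) + 1) = 0 := by
      intro n hn
      have hn' : ¬ Even n := by
        simp only [Set.mem_range, not_exists] at hn
        intro ⟨c, hc⟩; exact hn c (by omega)
      have hp : Even (n+1) := Nat.even_add_one.2 hn'
      rw [hp.neg_pow]; ring
    have h5 := (he.hasSum_iff (f := fun n : ℕ =>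
      y ^ (n + 1) / ((n:ℝ) + 1) - (-y) ^ (n + 1) / ((n:ℝ) + 1)) hvan).2 h3
    have hfe : (fun k : ℕ => 2 * y ^ (2*k + 1) / (2*(k:ℝ)+1)) =
        ((fun n : ℕ => y ^ (n + 1) / ((n:ℝ) + 1) - (-y) ^ (n + 1) / ((n:ℝ) + 1)) ∘
          (fun k : ℕ => 2*k)) := by
      funext k
      have hodd : Odd (2*k+1) := ⟨k, by ring⟩
      simp only [Function.comp_apply, hodd.neg_pow]
      push_cast
      ring
    rw [hfe]
    have hv : Real.log (1+y) - Real.log (1-y) = -Real.log (1 - y) - -Real.log (1 - -y) := by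
      rw [show (1 : ℝ) - -y = 1 + y by ring]; ring
    rw [hv]; exact h5
  have hyne : (2*t+1) * y = 1 := by rw [hy]; field_simp
  have hlog : Real.log (1+y) - Real.log (1-y) = Real.log (1+1/t) := by
    rw [← Real.log_div (by positivity) (by intro hc; nlinarith)]
    congr 1
    rw [hy]; field_simp; ring
  have h6 := h4.mul_left (t + 1/2)
  have h7 : HasSum (fun k : ℕ => y ^ (2*k) / (2*(k:ℝ)+1)) (gg t + (1:ℝ)) := by
    have hfe2 : (fun k : ℕ => y ^ (2*k) / (2*(k:ℝ)+1)) =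
        (fun k : ℕ => (t + 1/2) * (2 * y ^ (2*k + 1) / (2*(k:ℝ)+1))) := by
      funext k
      have hstep : (t + 1/2) * (2 * y^(2*k+1) / (2*(k:ℝ)+1))
          = ((2*t+1)*y) * (y^(2*k) / (2*(k:ℝ)+1)) := by
        rw [pow_succ]; ring
      rw [hstep, hyne, one_mul]
    rw [hfe2]
    refine (congrArg (HasSum _) ?_).mpr h6
    rw [hlog, gg]; ring
  have h8 : HasSum (fun n : ℕ => y ^ (2*(n+1)) / (2*((n+1:ℕ):ℝ)+1)) (gg t) := by
    refine (hasSum_nat_add_iff (f := fun k : ℕ => y ^ (2*k) / (2*(k:ℝ)+1)) 1).2 ?_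
    refine (congrArg (HasSum _) ?_).mpr h7
    simp
  refine h8.congr_fun ?_
  intro k
  push_cast
  ring_nf

lemma gg_pos_facts {t : ℝ} (ht : 0 < t) :
    0 < 1/(2*t+1) ∧ 1/(2*t+1) < 1 := by
  constructor
  · positivity
  · rw [div_lt_one (by linarith)]; linarith

lemma gg_le {t : ℝ} (ht : 0 < t) : gg t ≤ 1/(12*t) - 1/(12*(t+1)) := by
  obtain ⟨hy0, hy1⟩ := gg_pos_facts ht
  set y : ℝ := 1/(2*t+1) with hy
  have hy2 : y^2 < 1 := by nlinarith
  have hg : HasSum (fun k : ℕ => (y^2/3) * (y^2)^k) ((y^2/3) * (1-y^2)⁻¹) :=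
    (hasSum_geometric_of_lt_one (by positivity) hy2).mul_left _
  have hle := hasSum_le (fun k => ?_) (gg_hasSum ht) hg
  · refine hle.trans (le_of_eq ?_)
    have e1 : 1 - y^2 = (4*t*(t+1))/((2*t+1)^2) := by
      rw [hy]; field_simp; ring
    rw [e1, hy]
    have h1 : (2*t+1) ≠ 0 := by positivity
    have h2 : t ≠ 0 := ht.ne'
    have h3 : t + 1 ≠ 0 := by positivity
    field_simp
    ring
  · have he : (y^2/3) * (y^2)^k = y^(2*k+2)/3 := by
      rw [← pow_mul]; ring
    rw [he]
    gcongr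
    · linarith [Nat.cast_nonneg (α := ℝ) k]

set_option maxHeartbeats 1000000 in
lemma le_gg {t : ℝ} (ht : 0 < t) : 1/(12*t+1) - 1/(12*(t+1)+1) ≤ gg t := by
  obtain ⟨hy0, hy1⟩ := gg_pos_facts ht
  set y : ℝ := 1/(2*t+1) with hy
  have hy2 : y^2 < 1 := by nlinarith
  have hs := gg_hasSum ht
  have hsm := hs.summable
  have hsplit := Summable.sum_add_tsum_nat_add 5 hsm
  -- geometric lower bound for the tail
  have hg : HasSum (fun k : ℕ => (y^12/13) * (y^2/3)^k) ((y^12/13) * (1-y^2/3)⁻¹) :=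
    (hasSum_geometric_of_lt_one (by positivity) (by nlinarith)).mul_left _
  have htail : (y^12/13) * (1-y^2/3)⁻¹ ≤ ∑' k : ℕ, y ^ (2*(k+5)+2) / (2*((k+5:ℕ):ℝ)+3) := by
    refine hg.tsum_eq ▸ hg.summable.tsum_le_tsum (fun k => ?_) ?_
    · have h3k : (1:ℝ) + (k:ℝ)*2 ≤ 3^k := by
        have := one_add_mul_le_pow (by norm_num : (-2:ℝ) ≤ 2) k
        norm_num at this
        exact this
      have he : (y^12/13) * (y^2/3)^k = y^(2*(k+5)+2)/(13*3^k) := by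
        rw [div_pow (y^2) 3 k, ← pow_mul]
        ring
      rw [he]
      gcongr
      · push_cast; nlinarith [Nat.cast_nonneg (α := ℝ) k]
    · exact (summable_nat_add_iff 5).2 hsm
  have hfin : ∑ k ∈ Finset.range 5, y ^ (2*k+2) / (2*(k:ℝ)+3)
      = y^2/3 + y^4/5 + y^6/7 + y^8/9 + y^10/11 := by
    simp [Finset.sum_range_succ]
    norm_num
  have hlow : y^2/3 + y^4/5 + y^6/7 + y^8/9 + y^10/11 + (y^12/13) * (1-y^2/3)⁻¹ ≤ gg t := by
    rw [← hs.tsum_eq, ← hsplit, hfin]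
    exact add_le_add_right htail _
  refine le_trans ?_ hlow
  have e1 : 1 - y^2/3 = (12*t^2+12*t+2)/(3*(2*t+1)^2) := by
    rw [hy]; field_simp; ring
  rw [e1, hy]
  have h1 : (2*t+1) ≠ 0 := by positivity
  have h2 : (12*t+1) ≠ 0 := by positivity
  have h3 : (12*(t+1)+1) ≠ 0 := by positivity
  have h4 : (12*t^2+12*t+2) ≠ 0 := by positivity
  rw [div_add_div _ _ (by norm_num) (by norm_num)]
  field_simp
  ring_nf
  linarith [pow_pos ht 1, pow_pos ht 2, pow_pos ht 3, pow_pos ht 4, pow_pos ht 5, pow_pos ht 6, pow_pos ht 7, pow_pos ht 8, pow_pos ht 9, pow_pos ht 10, pow_pos ht 11, pow_pos ht 12, pow_pos ht 13, pow_pos ht 14, pow_pos ht 15, pow_pos ht 16, pow_pos ht 17, pow_pos ht 18, pow_pos ht 19, pow_pos ht 20, pow_pos ht 21, pow_pos ht 22, pow_pos ht 23, pow_pos ht 24, pow_pos ht 25, pow_pos ht 26, pow_pos ht 27, pow_pos ht 28, pow_pos ht 29, pow_pos ht 30, pow_pos ht 31, pow_pos ht 32, pow_pos ht 33, pow_pos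 ht 34, pow_pos ht 35, pow_pos ht 36, pow_pos ht 37, pow_pos ht 38, pow_pos ht 39, pow_pos ht 40, pow_pos ht 41, pow_pos ht 42, pow_pos ht 43, pow_pos ht 44]

noncomputable def Fl (t : ℝ) : ℝ := Real.log (Real.Gamma t) - (t - 1/2) * Real.log t + t

lemma Fl_step {t : ℝ} (ht : 0 < t) : Fl t - Fl (t+1) = gg t := by
  rw [Fl, Fl, Real.Gamma_add_one ht.ne',
    Real.log_mul ht.ne' (Real.Gamma_pos_of_pos ht).ne']
  have hlog : Real.log (1 + 1/t) = Real.log (t+1) - Real.log t := by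
    rw [← Real.log_div (by positivity) ht.ne']
    congr 1; field_simp
  rw [gg, hlog]; ring

lemma d_tendsto : Filter.Tendsto
    (fun n : ℕ => Real.log n.factorial - ((n:ℝ)+1/2)*Real.log n + n)
    Filter.atTop (𝓝 (Real.log (Real.sqrt (2*π)))) := by
  have hπ : (0:ℝ) < π := Real.pi_pos
  have h1 : Filter.Tendsto (fun n : ℕ => Real.log (Stirling.stirlingSeq n))
      Filter.atTop (𝓝 (Real.log (Real.sqrt π))) :=
    (Stirling.tendsto_stirlingSeq_sqrt_pi).log (by positivity)
  have h2 := h1.add_const (Real.log (Real.sqrt 2))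
  have hval : Real.log (Real.sqrt π) + Real.log (Real.sqrt 2) = Real.log (Real.sqrt (2*π)) := by
    rw [← Real.log_mul (by positivity) (by positivity), ← Real.sqrt_mul (by positivity)]
    ring_nf
  rw [hval] at h2
  refine h2.congr' ?_
  filter_upwards [Filter.eventually_ge_atTop 1] with n hn
  have hn' : (0:ℝ) < n := by exact_mod_cast hn
  rw [Stirling.stirlingSeq]
  rw [Real.log_div (by positivity) (by positivity), Real.log_mul (by positivity) (by positivity),
    Real.log_sqrt (by positivity), Real.log_pow, Real.log_div (by positivity) (Real.exp_ne_zero 1),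
    Real.log_exp, Real.log_mul (by norm_num) hn'.ne', Real.log_sqrt (by norm_num)]
  ring

lemma aux_lim (θ c : ℝ) : Filter.Tendsto (fun n : ℕ => ((n:ℝ)+c) * Real.log (1+θ/n))
    Filter.atTop (𝓝 θ) := by
  have h1 : Filter.Tendsto (fun n : ℕ => (n:ℝ) * Real.log (1+θ/n)) Filter.atTop (𝓝 θ) :=
    (Real.tendsto_mul_log_one_add_div_atTop θ).comp tendsto_natCast_atTop_atTop
  have h0 : Filter.Tendsto (fun n : ℕ => Real.log (1+θ/n)) Filter.atTop (𝓝 0) := by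
    have : Filter.Tendsto (fun n : ℕ => 1+θ/(n:ℝ)) Filter.atTop (𝓝 1) := by
      have := tendsto_const_div_atTop_nhds_zero_nat θ
      simpa using (tendsto_const_nhds (x := (1:ℝ))).add this
    have := this.log one_ne_zero
    simpa using this
  have := h1.add (h0.const_mul c)
  simp only [mul_zero, add_zero] at this
  refine this.congr fun n => ?_
  ring

lemma Fl_sandwich {θ : ℝ} (hθ0 : 0 ≤ θ) (hθ1 : θ < 1) {n : ℕ} (hn : 1 ≤ n) :
    Real.log n.factorial - ((n:ℝ)+1/2)*Real.log n + n + θ - ((n:ℝ)+1/2) * Real.log (1+θ/n)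
      ≤ Fl (θ + n) ∧
    Fl (θ + n) ≤ Real.log n.factorial - ((n:ℝ)+1/2)*Real.log n + n + θ
      - ((n:ℝ)+θ-1/2) * Real.log (1+θ/n) := by
  have hm : (0:ℝ) < n := by exact_mod_cast hn
  set m : ℝ := (n:ℝ) with hmdef
  have hs : 0 < θ + m := by linarith
  have hconv := Real.convexOn_log_Gamma
  -- Γ values at naturals
  have hΓm1 : Real.Gamma (m+1) = n.factorial := Real.Gamma_nat_eq_factorial n
  have hΓm : Real.log (Real.Gamma m) = Real.log n.factorial - Real.log m := by
    have h : Real.Gamma (m+1) = m * Real.Gamma m := Real.Gamma_add_one hm.ne'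
    rw [hΓm1] at h
    have h2 : Real.log (n.factorial : ℝ) = Real.log m + Real.log (Real.Gamma m) := by
      rw [h, Real.log_mul hm.ne' (Real.Gamma_pos_of_pos hm).ne']
    linarith
  -- expansion of log (θ + m)
  have hexp : Real.log (θ + m) = Real.log m + Real.log (1+θ/m) := by
    rw [← Real.log_mul hm.ne' (by positivity)]
    congr 1; field_simp; ring
  -- convexity upper bound : log Γ (θ+m) ≤ (1-θ) log Γ m + θ log Γ (m+1)
  have hub : Real.log (Real.Gamma (θ+m)) ≤
      (1-θ) * Real.log (Real.Gamma m) + θ * Real.log (Real.Gamma (m+1)) := by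
    have := hconv.2 (Set.mem_Ioi.2 hm) (Set.mem_Ioi.2 (by linarith : (0:ℝ) < m+1))
      (by linarith : (0:ℝ) ≤ 1-θ) hθ0 (by ring)
    simpa [Function.comp, show (1-θ)*m + θ*(m+1) = θ + m by ring] using this
  -- convexity lower bound : log Γ (m+1) ≤ θ log Γ (θ+m) + (1-θ) log Γ (θ+m+1)
  have hlb : Real.log (Real.Gamma (m+1)) ≤
      Real.log (Real.Gamma (θ+m)) + (1-θ) * Real.log (θ+m) := by
    have h := hconv.2 (Set.mem_Ioi.2 hs) (Set.mem_Ioi.2 (by linarith : (0:ℝ) < θ+m+1))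
      hθ0 (by linarith : (0:ℝ) ≤ 1-θ) (by ring)
    have he : θ * (θ+m) + (1-θ)*(θ+m+1) = m+1 := by ring
    simp only [Function.comp_apply, smul_eq_mul] at h
    rw [he] at h
    have hΓs : Real.Gamma (θ+m+1) = (θ+m) * Real.Gamma (θ+m) := Real.Gamma_add_one hs.ne'
    have : Real.log (Real.Gamma (θ+m+1)) = Real.log (θ+m) + Real.log (Real.Gamma (θ+m)) := by
      rw [hΓs, Real.log_mul hs.ne' (Real.Gamma_pos_of_pos hs).ne']
    rw [this] at h
    nlinarith [h]
  constructor
  · -- lower bound for Fl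
    rw [Fl, hexp]
    rw [hΓm1] at hlb
    nlinarith [hlb]
  · -- upper bound for Fl
    rw [Fl, hexp]
    rw [hΓm1, hΓm] at hub
    nlinarith [hub]

lemma Fl_tendsto {θ : ℝ} (hθ0 : 0 ≤ θ) (hθ1 : θ < 1) :
    Filter.Tendsto (fun n : ℕ => Fl (θ + n)) Filter.atTop (𝓝 (Real.log (Real.sqrt (2*π)))) := by
  have hd := d_tendsto
  have hlo : Filter.Tendsto (fun n : ℕ =>
      Real.log n.factorial - ((n:ℝ)+1/2)*Real.log n + n + θ - ((n:ℝ)+1/2) * Real.log (1+θ/n))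
      Filter.atTop (𝓝 (Real.log (Real.sqrt (2*π)))) := by
    have := (hd.add_const θ).sub (aux_lim θ (1/2))
    simpa using this
  have hhi : Filter.Tendsto (fun n : ℕ =>
      Real.log n.factorial - ((n:ℝ)+1/2)*Real.log n + n + θ - ((n:ℝ)+θ-1/2) * Real.log (1+θ/n))
      Filter.atTop (𝓝 (Real.log (Real.sqrt (2*π)))) := by
    have h2 : Filter.Tendsto (fun n : ℕ => ((n:ℝ)+(θ-1/2)) * Real.log (1+θ/n))
        Filter.atTop (𝓝 θ) := aux_lim θ (θ-1/2)
    have h3 := ((hd.add_const θ).sub h2).congr (fun n : ℕ => show _ =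
      Real.log n.factorial - ((n:ℝ)+1/2)*Real.log n + n + θ
        - ((n:ℝ)+θ-1/2) * Real.log (1+θ/n) by ring)
    simpa using h3
  refine tendsto_of_tendsto_of_tendsto_of_le_of_le' hlo hhi ?_ ?_
  · filter_upwards [Filter.eventually_ge_atTop 1] with n hn
    exact (Fl_sandwich hθ0 hθ1 hn).1
  · filter_upwards [Filter.eventually_ge_atTop 1] with n hn
    exact (Fl_sandwich hθ0 hθ1 hn).2

lemma Fl_teles {x : ℝ} (hx : 0 < x) (N : ℕ) :
    1/(12*x+1) - 1/(12*(x+N)+1) ≤ Fl x - Fl (x + N) ∧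
    Fl x - Fl (x + N) ≤ 1/(12*x) - 1/(12*(x+N)) := by
  induction N with
  | zero => simp
  | succ n ih =>
    have hxn : 0 < x + n := by positivity
    have hstep := Fl_step hxn
    have hl := le_gg hxn
    have hu := gg_le hxn
    have hcast : x + ((n:ℝ)+1) = (x + n) + 1 := by ring
    constructor
    · have := ih.1
      push_cast
      rw [hcast]
      have h12 : 12*((x+n)+1)+1 = 12*((x+↑n)+1)+1 := rfl
      nlinarith [hl, hstep, this]
    · have := ih.2
      push_cast
      rw [hcast]
      nlinarith [hu, hstep, this]

set_option maxHeartbeats 2000000 in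
theorem stirling_two_sided (x : ℝ) (hx : 0 < x) :
    Real.sqrt (2 * π) * x ^ (x + 1/2) * Real.exp (-x) * Real.exp (1 / (1 + 12 * x))
      ≤ Real.Gamma (x + 1) ∧
    Real.Gamma (x + 1)
      ≤ Real.sqrt (2 * π) * x ^ (x + 1/2) * Real.exp (-x) * Real.exp (1 / (12 * x)) := by
  have hπ := Real.pi_pos
  set L := Real.log (Real.sqrt (2*π)) with hL
  set θ := x - (⌊x⌋₊ : ℝ) with hθ
  have hθ0 : 0 ≤ θ := sub_nonneg.2 (Nat.floor_le hx.le)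
  have hθ1 : θ < 1 := by
    have := Nat.lt_floor_add_one x
    rw [hθ]; linarith
  have hlim : Filter.Tendsto (fun N : ℕ => Fl (x + N)) Filter.atTop (𝓝 L) := by
    have h := (Fl_tendsto hθ0 hθ1).comp (Filter.tendsto_add_atTop_nat ⌊x⌋₊)
    refine h.congr fun N => ?_
    simp only [Function.comp_apply]
    congr 1
    push_cast
    rw [hθ]; ring
  have h1 : Filter.Tendsto (fun N : ℕ => Fl x - Fl (x+N)) Filter.atTop (𝓝 (Fl x - L)) :=
    tendsto_const_nhds.sub hlim
  have hz : Filter.Tendsto (fun N : ℕ => (x + (N:ℝ))) Filter.atTop Filter.atTop :=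
    Filter.tendsto_atTop_add_const_left _ x tendsto_natCast_atTop_atTop
  have hz1 : Filter.Tendsto (fun N : ℕ => 1/(12*(x+(N:ℝ)))) Filter.atTop (𝓝 0) := by
    have := ((hz.const_mul_atTop (by norm_num : (0:ℝ) < 12))).inv_tendsto_atTop
    exact this.congr fun N => (one_div _).symm
  have hz2 : Filter.Tendsto (fun N : ℕ => 1/(12*(x+(N:ℝ))+1)) Filter.atTop (𝓝 0) := by
    have := (Filter.tendsto_atTop_add_const_right _ 1
      (hz.const_mul_atTop (by norm_num : (0:ℝ) < 12))).inv_tendsto_atTop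
    exact this.congr fun N => (one_div _).symm
  have hub : Fl x - L ≤ 1/(12*x) := by
    have h2 : Filter.Tendsto (fun N : ℕ => 1/(12*x) - 1/(12*(x+(N:ℝ))))
        Filter.atTop (𝓝 (1/(12*x))) := by
      simpa using hz1.const_sub (1/(12*x))
    exact le_of_tendsto_of_tendsto' h1 h2 fun N => (Fl_teles hx N).2
  have hlb : 1/(12*x+1) ≤ Fl x - L := by
    have h2 : Filter.Tendsto (fun N : ℕ => 1/(12*x+1) - 1/(12*(x+(N:ℝ))+1))
        Filter.atTop (𝓝 (1/(12*x+1))) := by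
      simpa using hz2.const_sub (1/(12*x+1))
    exact le_of_tendsto_of_tendsto' h2 h1 fun N => (Fl_teles hx N).1
  have hΓpos := Real.Gamma_pos_of_pos hx
  have hG : Real.Gamma (x+1) = Real.exp (Fl x + ((x+1/2)*Real.log x - x)) := by
    have h : Fl x + ((x+1/2)*Real.log x - x) = Real.log (Real.Gamma (x+1)) := by
      rw [Real.Gamma_add_one hx.ne', Real.log_mul hx.ne' hΓpos.ne', Fl]; ring
    rw [h, Real.exp_log (Real.Gamma_pos_of_pos (by linarith))]
  have hxpow : x ^ (x + 1/2) = Real.exp ((x+1/2)*Real.log x) := by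
    rw [Real.rpow_def_of_pos hx, mul_comm]
  have hsq : Real.sqrt (2*π) = Real.exp L := (Real.exp_log (by positivity)).symm
  constructor
  · rw [hG, hsq, hxpow, ← Real.exp_add, ← Real.exp_add, ← Real.exp_add]
    apply Real.exp_le_exp.2
    have he : 1/(1+12*x) = 1/(12*x+1) := by ring_nf
    rw [he]
    linarith
  · rw [hG, hsq, hxpow, ← Real.exp_add, ← Real.exp_add, ← Real.exp_add]
    apply Real.exp_le_exp.2
    linarith
end

section
/- For every integer T > 2, the ratio of Gamma values satisfies Γ((T+1)/2) / Γ(T/2) ≤ sqrt(T/(2e)) · (1 − 1/T)^(T/2) / (1 − 2/T)^((T−1)/2). -/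
open Real Filter Stirling
open scoped Topology Nat

set_option maxHeartbeats 1000000

namespace GRB

lemma step_upper (n : ℕ) :
    log (stirlingSeq (n + 1)) - log (stirlingSeq (n + 2)) ≤
      1 / (12 * ((n : ℝ) + 1)) - 1 / (12 * ((n : ℝ) + 2)) := by
  have hN : (0:ℝ) < (n : ℝ) + 1 := by positivity
  set q : ℝ := ((1 : ℝ) / (2 * ((n : ℝ) + 1) + 1)) ^ 2 with hq
  have hq0 : 0 ≤ q := sq_nonneg _
  have hq1 : q < 1 := by
    rw [hq, div_pow, one_pow, div_lt_one (by positivity)]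
    nlinarith [Nat.cast_nonneg (α := ℝ) n]
  have hgeo : HasSum (fun k : ℕ => 1/3 * q ^ (k + 1)) (1/3 * q * (1 - q)⁻¹) := by
    have h := ((hasSum_geometric_of_lt_one hq0 hq1).mul_left (1/3 * q))
    simp only [mul_assoc, ← pow_succ'] at h
    simpa [mul_assoc] using h
  have hmain := log_stirlingSeq_diff_hasSum n
  have hle : log (stirlingSeq (n + 1)) - log (stirlingSeq (n + 2)) ≤ 1/3 * q * (1 - q)⁻¹ := by
    push_cast at hmain
    refine hasSum_le (fun k => ?_) hmain hgeo
    have hterm : ((1:ℝ) / (2 * ((k:ℝ) + 1) + 1)) ≤ 1/3 := by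
      rw [div_le_div_iff₀ (by positivity) (by norm_num)]
      nlinarith [Nat.cast_nonneg (α := ℝ) k]
    exact mul_le_mul_of_nonneg_right hterm (pow_nonneg hq0 _)
  refine hle.trans (le_of_eq ?_)
  have h1 : (2*((n:ℝ)+1)+1) ≠ 0 := by positivity
  have h2 : (1:ℝ) - q ≠ 0 := ne_of_gt (by linarith)
  rw [← div_eq_mul_inv, div_eq_iff h2, hq]
  field_simp
  ring

lemma step_lower (n : ℕ) :
    1 / (12 * ((n : ℝ) + 1) + 1) - 1 / (12 * ((n : ℝ) + 2) + 1) ≤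
      log (stirlingSeq (n + 1)) - log (stirlingSeq (n + 2)) := by
  have hmain := log_stirlingSeq_diff_hasSum n
  have h0 := le_hasSum hmain 0 (fun j _ => by positivity)
  refine le_trans ?_ h0
  push_cast
  have hN : (0:ℝ) ≤ (n:ℝ) := Nat.cast_nonneg n
  have h1 : (0:ℝ) < 12*((n:ℝ)+1)+1 := by positivity
  have h2 : (0:ℝ) < 12*((n:ℝ)+2)+1 := by positivity
  have h3 : (0:ℝ) < 2*((n:ℝ)+1)+1 := by positivity
  rw [div_sub_div _ _ h1.ne' h2.ne', pow_one, div_pow, one_pow, div_mul_div_comm,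
    div_le_div_iff₀ (by positivity) (by positivity)]
  ring_nf
  nlinarith [hN, sq_nonneg ((n:ℝ))]


lemma tendsto_log_stirling :
    Tendsto (fun M : ℕ => log (stirlingSeq (M + 1))) atTop (𝓝 (log (√π))) := by
  have hpi : (0:ℝ) < √π := Real.sqrt_pos.mpr Real.pi_pos
  exact ((Real.continuousAt_log hpi.ne').tendsto.comp
    (tendsto_stirlingSeq_sqrt_pi.comp (tendsto_add_atTop_nat 1)))

lemma tendsto_one_div_shift (c : ℝ) :
    Tendsto (fun M : ℕ => 1 / (12 * ((M : ℝ) + 1) + c)) atTop (𝓝 0) := by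
  simp only [one_div]
  apply Tendsto.comp tendsto_inv_atTop_zero
  apply tendsto_atTop_add_const_right
  apply Tendsto.const_mul_atTop (by norm_num : (0:ℝ) < 12)
  exact tendsto_atTop_add_const_right _ _ tendsto_natCast_atTop_atTop

lemma robbins_log_upper (n : ℕ) :
    log (stirlingSeq (n + 1)) ≤ log (√π) + 1 / (12 * ((n : ℝ) + 1)) := by
  have mono : ∀ M, n ≤ M →
      log (stirlingSeq (n + 1)) - 1 / (12 * ((n : ℝ) + 1)) ≤
        log (stirlingSeq (M + 1)) - 1 / (12 * ((M : ℝ) + 1)) := by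
    intro M hM
    induction M, hM using Nat.le_induction with
    | base => exact le_refl _
    | succ M hM ih =>
      have := step_upper M
      rw [show M+1+1 = M+2 from rfl]
      push_cast
      rw [show ((M:ℝ)+1+1) = (M:ℝ)+2 by ring]
      push_cast at ih this
      linarith
  have hlim : Tendsto (fun M : ℕ => log (stirlingSeq (M + 1)) - 1 / (12 * ((M : ℝ) + 1)))
      atTop (𝓝 (log (√π) - 0)) := by
    have h0 := tendsto_one_div_shift 0
    simp only [add_zero] at h0
    exact tendsto_log_stirling.sub h0
  have := ge_of_tendsto hlim (eventually_atTop.mpr ⟨n, mono⟩)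
  rw [sub_zero] at this
  linarith

lemma robbins_log_lower (n : ℕ) :
    log (√π) + 1 / (12 * ((n : ℝ) + 1) + 1) ≤ log (stirlingSeq (n + 1)) := by
  have mono : ∀ M, n ≤ M →
      log (stirlingSeq (M + 1)) - 1 / (12 * ((M : ℝ) + 1) + 1) ≤
        log (stirlingSeq (n + 1)) - 1 / (12 * ((n : ℝ) + 1) + 1) := by
    intro M hM
    induction M, hM using Nat.le_induction with
    | base => exact le_refl _
    | succ M hM ih =>
      have := step_lower M
      rw [show M+1+1 = M+2 from rfl]
      push_cast
      rw [show ((M:ℝ)+1+1) = (M:ℝ)+2 by ring]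
      push_cast at ih this
      linarith
  have hlim : Tendsto (fun M : ℕ => log (stirlingSeq (M + 1)) - 1 / (12 * ((M : ℝ) + 1) + 1))
      atTop (𝓝 (log (√π) - 0)) := by
    exact tendsto_log_stirling.sub (tendsto_one_div_shift 1)
  have := le_of_tendsto hlim (eventually_atTop.mpr ⟨n, mono⟩)
  rw [sub_zero] at this
  linarith

lemma robbins_upper (n : ℕ) (hn : n ≠ 0) :
    stirlingSeq n ≤ √π * exp (1 / (12 * (n : ℝ))) := by
  obtain ⟨m, rfl⟩ := Nat.exists_eq_succ_of_ne_zero hn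
  have hpos := stirlingSeq'_pos m
  have h := robbins_log_upper m
  have := Real.exp_le_exp.mpr h
  rw [Real.exp_log hpos, Real.exp_add, Real.exp_log (Real.sqrt_pos.mpr Real.pi_pos)] at this
  push_cast
  convert this using 4 <;> push_cast <;> ring

lemma robbins_lower (n : ℕ) (hn : n ≠ 0) :
    √π * exp (1 / (12 * (n : ℝ) + 1)) ≤ stirlingSeq n := by
  obtain ⟨m, rfl⟩ := Nat.exists_eq_succ_of_ne_zero hn
  have hpos := stirlingSeq'_pos m
  have h := robbins_log_lower m
  have := Real.exp_le_exp.mpr h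
  rw [Real.exp_log hpos, Real.exp_add, Real.exp_log (Real.sqrt_pos.mpr Real.pi_pos)] at this
  push_cast
  convert this using 4 <;> push_cast <;> ring


lemma log_one_add_ge (t : ℝ) (h0 : 0 < t) (h1 : t ≤ 1/3) :
    t - t^2/2 + t^3/3 - t^4/4 + t^5/5 - t^6/6 - t^7/(1-t) ≤ Real.log (1 + t) := by
  have habs : |(-t)| < 1 := by rw [abs_neg, abs_of_pos h0]; linarith
  have h := Real.abs_log_sub_add_sum_range_le habs 6
  rw [abs_le] at h
  have h' := h.1
  simp only [Finset.sum_range_succ, Finset.sum_range_zero, abs_neg, abs_of_pos h0] at h'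
  have he : (1:ℝ) - -t = 1 + t := by ring
  rw [he] at h'
  norm_num at h'
  nlinarith [h']

lemma log_one_sub_ge (t : ℝ) (h0 : 0 < t) (h1 : t ≤ 1/2) :
    -(t + t^2/2 + t^3/3 + t^4/4) - t^5/(1-t) ≤ Real.log (1 - t) := by
  have habs : |t| < 1 := by rw [abs_of_pos h0]; linarith
  have h := Real.abs_log_sub_add_sum_range_le habs 4
  rw [abs_le] at h
  have h' := h.1
  simp only [Finset.sum_range_succ, Finset.sum_range_zero, abs_of_pos h0] at h'
  norm_num at h'
  nlinarith [h']

lemma key_odd (M : ℝ) (h : 2 ≤ M) :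
    1/(6*M) - 1/(24*M+1) + 1/2 ≤ M * Real.log (2*M/(2*M-1)) := by
  have hM : (0:ℝ) < M := by linarith
  have hd : (0:ℝ) < 2*M - 1 := by linarith
  set t : ℝ := 1/(2*M-1) with htdef
  have ht0 : 0 < t := by positivity
  have ht1 : t ≤ 1/3 := by rw [htdef, div_le_div_iff₀ hd (by norm_num)]; linarith
  have harg : 2*M/(2*M-1) = 1 + t := by rw [htdef]; field_simp; ring
  rw [harg]
  have hlog := log_one_add_ge t ht0 ht1
  have hmul := mul_le_mul_of_nonneg_left hlog hM.le
  refine le_trans ?_ hmul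
  rw [htdef]
  rw [← sub_nonneg]
  have h1t : (1:ℝ) - 1/(2*M-1) = (2*M-2)/(2*M-1) := by field_simp; ring
  rw [h1t]
  have hrw : M * (1/(2*M-1) - (1/(2*M-1))^2/2 + (1/(2*M-1))^3/3 - (1/(2*M-1))^4/4
        + (1/(2*M-1))^5/5 - (1/(2*M-1))^6/6 - (1/(2*M-1))^7/((2*M-2)/(2*M-1)))
      - (1/(6*M) - 1/(24*M+1) + 1/2)
      = (47006 + 249832*(M-2) + 532609*(M-2)^2 + 613977*(M-2)^3 + 419480*(M-2)^4
          + 170756*(M-2)^5 + 38400*(M-2)^6 + 3680*(M-2)^7)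
        / (30*M*(24*M+1)*(2*M-1)^6*(2*M-2)) := by
    have h2 : (2*M-2) ≠ 0 := by linarith
    have h3 : (24*M+1) ≠ 0 := by positivity
    have h5 : M - 1 ≠ 0 := by linarith
    have h6 : M*2 - 1 ≠ 0 := by linarith
    field_simp
    ring
  rw [hrw]
  have hs : (0:ℝ) ≤ M - 2 := by linarith
  have hD : (0:ℝ) < 30*M*(24*M+1)*(2*M-1)^6*(2*M-2) := by
    have : (0:ℝ) < 2*M-2 := by linarith
    positivity
  apply div_nonneg _ hD.le
  have p2 := pow_nonneg hs 2
  have p3 := pow_nonneg hs 3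
  have p4 := pow_nonneg hs 4
  have p5 := pow_nonneg hs 5
  have p6 := pow_nonneg hs 6
  have p7 := pow_nonneg hs 7
  linarith [p2, p3, p4, p5, p6, p7, hs]

lemma key_even (M : ℝ) (h : 4 ≤ M) :
    1/(24*M) - 2/(12*M+1) + 1/2 ≤
      M * Real.log ((2*M-1)/(2*M)) + (M - 1/2) * Real.log (M/(M-1)) := by
  have hM : (0:ℝ) < M := by linarith
  have hM1 : (0:ℝ) < M - 1 := by linarith
  set t : ℝ := 1/(2*M) with htdef
  set y : ℝ := 1/(M-1) with hydef
  have ht0 : 0 < t := by positivity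
  have ht1 : t ≤ 1/2 := by rw [htdef, div_le_div_iff₀ (by positivity) (by norm_num)]; linarith
  have hy0 : 0 < y := by positivity
  have hy1 : y ≤ 1/3 := by rw [hydef, div_le_div_iff₀ hM1 (by norm_num)]; linarith
  have harg1 : (2*M-1)/(2*M) = 1 - t := by rw [htdef]; field_simp
  have harg2 : M/(M-1) = 1 + y := by rw [hydef]; field_simp; ring
  rw [harg1, harg2]
  have hlog1 := log_one_sub_ge t ht0 ht1
  have hlog2 := log_one_add_ge y hy0 hy1
  have hmul1 := mul_le_mul_of_nonneg_left hlog1 hM.le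
  have hmul2 := mul_le_mul_of_nonneg_left hlog2 (by linarith : (0:ℝ) ≤ M - 1/2)
  refine le_trans ?_ (add_le_add hmul1 hmul2)
  rw [htdef, hydef, ← sub_nonneg]
  have h1t : (1:ℝ) - 1/(2*M) = (2*M-1)/(2*M) := by field_simp
  have h1y : (1:ℝ) - 1/(M-1) = (M-2)/(M-1) := by field_simp; ring
  rw [h1t, h1y]
  have hrw : M * (-(1/(2*M) + (1/(2*M))^2/2 + (1/(2*M))^3/3 + (1/(2*M))^4/4)
        - (1/(2*M))^5/((2*M-1)/(2*M)))
      + (M - 1/2) * (1/(M-1) - (1/(M-1))^2/2 + (1/(M-1))^3/3 - (1/(M-1))^4/4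
        + (1/(M-1))^5/5 - (1/(M-1))^6/6 - (1/(M-1))^7/((M-2)/(M-1)))
      - (1/(24*M) - 2/(12*M+1) + 1/2)
      = (463492288 + 5652340160*(M-4) + 13355162044*(M-4)^2 + 15686352694*(M-4)^3
          + 11412026876*(M-4)^4 + 5642192266*(M-4)^5 + 1981294080*(M-4)^6
          + 502941946*(M-4)^7 + 92102156*(M-4)^8 + 11901014*(M-4)^9 + 1031356*(M-4)^10
          + 53840*(M-4)^11 + 1280*(M-4)^12)
        / (120*M*(12*M+1)*(2*M)^4*(2*M-1)*(M-1)^6*(M-2)) := by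
    have h2 : (2*M-1) ≠ 0 := by linarith
    have h3 : (12*M+1) ≠ 0 := by positivity
    have h4 : (M-2) ≠ 0 := by linarith
    have h5 : (M-1) ≠ 0 := by linarith
    have h7 : M*2 - 1 ≠ 0 := by linarith
    field_simp
    ring
  rw [hrw]
  have hs : (0:ℝ) ≤ M - 4 := by linarith
  have hD : (0:ℝ) < 120*M*(12*M+1)*(2*M)^4*(2*M-1)*(M-1)^6*(M-2) := by
    have h6 : (0:ℝ) < 2*M-1 := by linarith
    have h7 : (0:ℝ) < M-2 := by linarith
    positivity
  apply div_nonneg _ hD.le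
  have p2 := pow_nonneg hs 2
  have p3 := pow_nonneg hs 3
  have p4 := pow_nonneg hs 4
  have p5 := pow_nonneg hs 5
  have p6 := pow_nonneg hs 6
  have p7 := pow_nonneg hs 7
  have p8 := pow_nonneg hs 8
  have p9 := pow_nonneg hs 9
  have p10 := pow_nonneg hs 10
  have p11 := pow_nonneg hs 11
  have p12 := pow_nonneg hs 12
  linarith [p2, p3, p4, p5, p6, p7, p8, p9, p10, p11, p12, hs]


lemma log_one_sub_le8 (t : ℝ) (h0 : 0 < t) (h1 : t ≤ 1/2) :
    Real.log (1 - t) ≤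
      -(t + t^2/2 + t^3/3 + t^4/4 + t^5/5 + t^6/6 + t^7/7 + t^8/8) + t^9/(1-t) := by
  have habs : |t| < 1 := by rw [abs_of_pos h0]; linarith
  have h := Real.abs_log_sub_add_sum_range_le habs 8
  rw [abs_le] at h
  have h' := h.2
  simp only [Finset.sum_range_succ, Finset.sum_range_zero, abs_of_pos h0] at h'
  norm_num at h'
  nlinarith [h']

lemma key_odd_nat (m : ℕ) (hm : 1 ≤ m) :
    1/(6*(m:ℝ)) - 1/(24*(m:ℝ)+1) + 1/2 ≤ (m:ℝ) * Real.log (2*(m:ℝ)/(2*(m:ℝ)-1)) := by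
  rcases eq_or_lt_of_le hm with h1 | h2
  · have : (m:ℝ) = 1 := by exact_mod_cast h1.symm
    rw [this]
    norm_num
    linarith [Real.log_two_gt_d9]
  · exact key_odd (m:ℝ) (by exact_mod_cast h2)

lemma key_even_nat (m : ℕ) (hm : 2 ≤ m) :
    1/(24*(m:ℝ)) - 2/(12*(m:ℝ)+1) + 1/2 ≤
      (m:ℝ) * Real.log ((2*(m:ℝ)-1)/(2*(m:ℝ))) + ((m:ℝ) - 1/2) * Real.log ((m:ℝ)/((m:ℝ)-1)) := by
  match m, hm with
  | 2, _ => 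
    have hb := log_one_sub_ge (1/4) (by norm_num) (by norm_num)
    have e1 : (1:ℝ) - 1/4 = (2*(2:ℝ)-1)/(2*2) := by norm_num
    rw [e1] at hb
    have e2 : ((2:ℕ):ℝ) = 2 := by norm_num
    rw [e2]
    have e3 : ((2:ℝ))/(2-1) = 2 := by norm_num
    rw [e3]
    nlinarith [Real.log_two_gt_d9, hb]
  | 3, _ =>
    have e2 : ((3:ℕ):ℝ) = 3 := by norm_num
    rw [e2]
    -- log((5:ℝ)/6) lower bound
    have hb := log_one_sub_ge (1/6) (by norm_num) (by norm_num)
    have e1 : (1:ℝ) - 1/6 = (2*(3:ℝ)-1)/(2*3) := by norm_num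
    rw [e1] at hb
    -- log(3/2) = - log (2/3), log(2/3) = log (1 - 1/3) upper bound
    have hc := log_one_sub_le8 (1/3) (by norm_num) (by norm_num)
    have e4 : (1:ℝ) - 1/3 = 2/3 := by norm_num
    rw [e4] at hc
    have e5 : Real.log ((3:ℝ)/(3-1)) = - Real.log ((2:ℝ)/3) := by
      rw [← Real.log_inv]
      norm_num
    rw [e5]
    nlinarith [hb, hc]
  | (k+4), _ =>
    have h4 : (4:ℝ) ≤ ((k+4:ℕ):ℝ) := by push_cast; linarith [Nat.cast_nonneg (α := ℝ) k]
    exact key_even ((k+4:ℕ):ℝ) h4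


lemma fact_stirling (k : ℕ) (hk : k ≠ 0) :
    (k ! : ℝ) = stirlingSeq k * (√(2*(k:ℝ)) * ((k:ℝ)/exp 1)^k) := by
  have hk0 : 0 < (k:ℝ) := Nat.cast_pos.mpr (Nat.pos_of_ne_zero hk)
  have hd : √(2*(k:ℝ)) * ((k:ℝ)/exp 1)^k ≠ 0 := by positivity
  rw [stirlingSeq, div_mul_cancel₀ _ hd]

lemma stirling_pos (k : ℕ) (hk : k ≠ 0) : 0 < stirlingSeq k := by
  obtain ⟨j, rfl⟩ := Nat.exists_eq_succ_of_ne_zero hk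
  exact stirlingSeq'_pos j

lemma log_fact (k : ℕ) (hk : k ≠ 0) :
    Real.log (k !) = Real.log (stirlingSeq k) + (Real.log 2 + Real.log k)/2
      + k*(Real.log k - 1) := by
  have hk0 : 0 < (k:ℝ) := Nat.cast_pos.mpr (Nat.pos_of_ne_zero hk)
  have hs := stirling_pos k hk
  rw [fact_stirling k hk, Real.log_mul hs.ne' (by positivity),
    Real.log_mul (by positivity) (by positivity), Real.log_sqrt (by positivity),
    Real.log_mul two_ne_zero hk0.ne', Real.log_pow,
    Real.log_div hk0.ne' (exp_ne_zero 1), Real.log_exp]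
  ring

lemma Gamma_half (m : ℕ) :
    Real.Gamma ((m:ℝ) + 1/2) = √π * ((2*m)! : ℝ) / (4^m * (m ! : ℝ)) := by
  induction m with
  | zero => norm_num [Real.Gamma_one_half_eq]
  | succ k ih =>
    have hne : ((k:ℝ) + 1/2) ≠ 0 := by positivity
    have e : ((k+1:ℕ):ℝ) + 1/2 = ((k:ℝ) + 1/2) + 1 := by push_cast; ring
    rw [e, Real.Gamma_add_one hne, ih]
    have e2 : 2*(k+1) = (2*k+1) + 1 := by ring
    rw [e2, Nat.factorial_succ, Nat.factorial_succ, Nat.factorial_succ]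
    have h4 : ((4:ℝ))^k ≠ 0 := by positivity
    have hf : ((k !:ℕ):ℝ) ≠ 0 := Nat.cast_ne_zero.mpr (Nat.factorial_ne_zero k)
    push_cast
    field_simp
    ring

lemma robbins_log_up (k : ℕ) (hk : k ≠ 0) :
    Real.log (stirlingSeq k) ≤ Real.log π / 2 + 1/(12*(k:ℝ)) := by
  obtain ⟨j, rfl⟩ := Nat.exists_eq_succ_of_ne_zero hk
  have h := robbins_log_upper j
  rw [Real.log_sqrt Real.pi_pos.le] at h
  push_cast at h ⊢
  linarith

lemma robbins_log_lo (k : ℕ) (hk : k ≠ 0) :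
    Real.log π / 2 + 1/(12*(k:ℝ)+1) ≤ Real.log (stirlingSeq k) := by
  obtain ⟨j, rfl⟩ := Nat.exists_eq_succ_of_ne_zero hk
  have h := robbins_log_lower j
  rw [Real.log_sqrt Real.pi_pos.le] at h
  push_cast at h ⊢
  linarith


lemma main_odd (m : ℕ) (hm : 1 ≤ m) :
    Real.Gamma ((2*(m:ℝ)+1+1)/2) / Real.Gamma ((2*(m:ℝ)+1)/2) ≤
      √((2*(m:ℝ)+1)/(2*exp 1)) * (1 - 1/(2*(m:ℝ)+1)) ^ ((2*(m:ℝ)+1)/2) /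
        (1 - 2/(2*(m:ℝ)+1)) ^ ((2*(m:ℝ)+1-1)/2) := by
  have hm1 : (1:ℝ) ≤ (m:ℝ) := by exact_mod_cast hm
  have hmpos : (0:ℝ) < (m:ℝ) := by linarith
  have hn : (0:ℝ) < 2*(m:ℝ)+1 := by linarith
  have hb : (0:ℝ) < 1 - 1/(2*(m:ℝ)+1) := by
    rw [sub_pos, div_lt_one hn]; linarith
  have hc : (0:ℝ) < 1 - 2/(2*(m:ℝ)+1) := by
    rw [sub_pos, div_lt_one hn]; linarith
  have hfm : ((m !:ℕ):ℝ) ≠ 0 := Nat.cast_ne_zero.mpr (Nat.factorial_ne_zero m)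
  have hf2m : (0:ℝ) < (((2*m)!:ℕ):ℝ) := Nat.cast_pos.mpr (Nat.factorial_pos _)
  have hsp : (0:ℝ) < √π := Real.sqrt_pos.mpr Real.pi_pos
  have h4 : (0:ℝ) < (4:ℝ)^m := by positivity
  -- Gamma values
  have eΓa : Real.Gamma ((2*(m:ℝ)+1+1)/2) = (m ! : ℝ) := by
    rw [show (2*(m:ℝ)+1+1)/2 = (m:ℝ)+1 by ring, Real.Gamma_nat_eq_factorial]
  have eΓb : Real.Gamma ((2*(m:ℝ)+1)/2) = √π * ((2*m)! : ℝ) / (4^m * (m ! : ℝ)) := by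
    rw [show (2*(m:ℝ)+1)/2 = (m:ℝ)+1/2 by ring, Gamma_half]
  rw [eΓa, eΓb]
  have hΓb : (0:ℝ) < √π * ((2*m)! : ℝ) / (4^m * (m ! : ℝ)) := by positivity
  have hfmpos : (0:ℝ) < ((m !:ℕ):ℝ) := Nat.cast_pos.mpr (Nat.factorial_pos m)
  have hL : (0:ℝ) < (m ! : ℝ) / (√π * ((2*m)! : ℝ) / (4^m * (m ! : ℝ))) := by positivity
  have hR : (0:ℝ) < √((2*(m:ℝ)+1)/(2*exp 1)) * (1 - 1/(2*(m:ℝ)+1)) ^ ((2*(m:ℝ)+1)/2) /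
      (1 - 2/(2*(m:ℝ)+1)) ^ ((2*(m:ℝ)+1-1)/2) := by
    have h1 : (0:ℝ) < √((2*(m:ℝ)+1)/(2*exp 1)) := Real.sqrt_pos.mpr (by positivity)
    have h2 := Real.rpow_pos_of_pos hb ((2*(m:ℝ)+1)/2)
    have h3 := Real.rpow_pos_of_pos hc ((2*(m:ℝ)+1-1)/2)
    positivity
  rw [← Real.log_le_log_iff hL hR]
  -- decompose LHS
  rw [Real.log_div hfmpos.ne' hΓb.ne', Real.log_div (by positivity) (by positivity),
    Real.log_mul hsp.ne' hf2m.ne', Real.log_mul h4.ne' hfm, Real.log_pow,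
    Real.log_sqrt Real.pi_pos.le]
  -- decompose RHS
  rw [Real.log_div (by positivity) (Real.rpow_pos_of_pos hc _).ne',
    Real.log_mul (Real.sqrt_pos.mpr (by positivity)).ne' (Real.rpow_pos_of_pos hb _).ne',
    Real.log_sqrt (by positivity), Real.log_rpow hb, Real.log_rpow hc,
    Real.log_div hn.ne' (by positivity), Real.log_mul two_ne_zero (exp_ne_zero 1),
    Real.log_exp]
  -- value rewrites
  have hbe : 1 - 1/(2*(m:ℝ)+1) = 2*(m:ℝ)/(2*(m:ℝ)+1) := by field_simp; ring
  have hce : 1 - 2/(2*(m:ℝ)+1) = (2*(m:ℝ)-1)/(2*(m:ℝ)+1) := by field_simp; ring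
  have hq : (0:ℝ) < 2*(m:ℝ)-1 := by linarith
  have l1 : Real.log (1 - 1/(2*(m:ℝ)+1)) =
      Real.log 2 + Real.log (m:ℝ) - Real.log (2*(m:ℝ)+1) := by
    rw [hbe, Real.log_div (by positivity) hn.ne', Real.log_mul two_ne_zero hmpos.ne']
  have l2 : Real.log (1 - 2/(2*(m:ℝ)+1)) =
      Real.log (2*(m:ℝ)-1) - Real.log (2*(m:ℝ)+1) := by
    rw [hce, Real.log_div hq.ne' hn.ne']
  rw [l1, l2]
  have l6 : Real.log 4 = 2 * Real.log 2 := by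
    rw [show (4:ℝ) = 2^2 by norm_num, Real.log_pow]; push_cast; ring
  rw [l6]
  -- factorial logs
  have lf1 := log_fact m (by omega)
  have lf2 := log_fact (2*m) (by omega)
  have c2m : ((2*m:ℕ):ℝ) = 2*(m:ℝ) := by push_cast; ring
  rw [c2m] at lf2
  have l4 : Real.log (2*(m:ℝ)) = Real.log 2 + Real.log (m:ℝ) :=
    Real.log_mul two_ne_zero hmpos.ne'
  rw [l4] at lf2
  rw [lf1, lf2]
  -- bounds
  have ru := robbins_log_up m (by omega)
  have rl := robbins_log_lo (2*m) (by omega)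
  rw [c2m] at rl
  have key := key_odd_nat m hm
  have l5 : Real.log (2*(m:ℝ)/(2*(m:ℝ)-1)) =
      Real.log 2 + Real.log (m:ℝ) - Real.log (2*(m:ℝ)-1) := by
    rw [Real.log_div (by positivity) hq.ne', Real.log_mul two_ne_zero hmpos.ne']
  rw [show 12*(2*(m:ℝ)) + 1 = 24*(m:ℝ)+1 by ring] at rl
  rw [l5] at key
  rw [show 1/(12*(m:ℝ)) = (1/2) * (1/(6*(m:ℝ))) by ring] at ru
  linarith [key, ru, rl]


lemma main_even (m : ℕ) (hm : 2 ≤ m) :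
    Real.Gamma ((2*(m:ℝ)+1)/2) / Real.Gamma (2*(m:ℝ)/2) ≤
      √(2*(m:ℝ)/(2*exp 1)) * (1 - 1/(2*(m:ℝ))) ^ (2*(m:ℝ)/2) /
        (1 - 2/(2*(m:ℝ))) ^ ((2*(m:ℝ)-1)/2) := by
  have hm1 : (2:ℝ) ≤ (m:ℝ) := by exact_mod_cast hm
  have hmpos : (0:ℝ) < (m:ℝ) := by linarith
  have hn : (0:ℝ) < 2*(m:ℝ) := by linarith
  have hq : (0:ℝ) < 2*(m:ℝ)-1 := by linarith
  have hw : (0:ℝ) < (m:ℝ)-1 := by linarith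
  have hb : (0:ℝ) < 1 - 1/(2*(m:ℝ)) := by
    rw [sub_pos, div_lt_one hn]; linarith
  have hc : (0:ℝ) < 1 - 2/(2*(m:ℝ)) := by
    rw [sub_pos, div_lt_one hn]; linarith
  have hfm : ((m !:ℕ):ℝ) ≠ 0 := Nat.cast_ne_zero.mpr (Nat.factorial_ne_zero m)
  have hfmpos : (0:ℝ) < ((m !:ℕ):ℝ) := Nat.cast_pos.mpr (Nat.factorial_pos m)
  have hf2m : (0:ℝ) < (((2*m)!:ℕ):ℝ) := Nat.cast_pos.mpr (Nat.factorial_pos _)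
  have hfm1 : (0:ℝ) < (((m-1)!:ℕ):ℝ) := Nat.cast_pos.mpr (Nat.factorial_pos _)
  have hsp : (0:ℝ) < √π := Real.sqrt_pos.mpr Real.pi_pos
  have h4 : (0:ℝ) < (4:ℝ)^m := by positivity
  have eΓa : Real.Gamma ((2*(m:ℝ)+1)/2) = √π * ((2*m)! : ℝ) / (4^m * (m ! : ℝ)) := by
    rw [show (2*(m:ℝ)+1)/2 = (m:ℝ)+1/2 by ring, Gamma_half]
  have cm1 : ((m-1:ℕ):ℝ) = (m:ℝ)-1 := by
    push_cast [Nat.cast_sub (by omega : 1 ≤ m)]; ring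
  have eΓb : Real.Gamma (2*(m:ℝ)/2) = ((m-1)! : ℝ) := by
    rw [show 2*(m:ℝ)/2 = ((m-1:ℕ):ℝ)+1 by rw [cm1]; ring, Real.Gamma_nat_eq_factorial]
  rw [eΓa, eΓb]
  have hΓa : (0:ℝ) < √π * ((2*m)! : ℝ) / (4^m * (m ! : ℝ)) := by positivity
  have hL : (0:ℝ) < √π * ((2*m)! : ℝ) / (4^m * (m ! : ℝ)) / ((m-1)! : ℝ) := by positivity
  have hR : (0:ℝ) < √(2*(m:ℝ)/(2*exp 1)) * (1 - 1/(2*(m:ℝ))) ^ (2*(m:ℝ)/2) /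
      (1 - 2/(2*(m:ℝ))) ^ ((2*(m:ℝ)-1)/2) := by
    have h1 : (0:ℝ) < √(2*(m:ℝ)/(2*exp 1)) := Real.sqrt_pos.mpr (by positivity)
    have h2 := Real.rpow_pos_of_pos hb (2*(m:ℝ)/2)
    have h3 := Real.rpow_pos_of_pos hc ((2*(m:ℝ)-1)/2)
    positivity
  rw [← Real.log_le_log_iff hL hR]
  -- LHS decomposition
  rw [Real.log_div hΓa.ne' hfm1.ne', Real.log_div (by positivity) (by positivity),
    Real.log_mul hsp.ne' hf2m.ne', Real.log_mul h4.ne' hfm, Real.log_pow,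
    Real.log_sqrt Real.pi_pos.le]
  -- RHS decomposition
  rw [Real.log_div (by positivity) (Real.rpow_pos_of_pos hc _).ne',
    Real.log_mul (Real.sqrt_pos.mpr (by positivity)).ne' (Real.rpow_pos_of_pos hb _).ne',
    Real.log_sqrt (by positivity), Real.log_rpow hb, Real.log_rpow hc,
    Real.log_div hn.ne' (by positivity), Real.log_mul two_ne_zero (exp_ne_zero 1),
    Real.log_exp]
  have hbe : 1 - 1/(2*(m:ℝ)) = (2*(m:ℝ)-1)/(2*(m:ℝ)) := by field_simp
  have hce : 1 - 2/(2*(m:ℝ)) = ((m:ℝ)-1)/(m:ℝ) := by field_simp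
  have l1 : Real.log (1 - 1/(2*(m:ℝ))) =
      Real.log (2*(m:ℝ)-1) - (Real.log 2 + Real.log (m:ℝ)) := by
    rw [hbe, Real.log_div hq.ne' hn.ne', Real.log_mul two_ne_zero hmpos.ne']
  have l2 : Real.log (1 - 2/(2*(m:ℝ))) = Real.log ((m:ℝ)-1) - Real.log (m:ℝ) := by
    rw [hce, Real.log_div hw.ne' hmpos.ne']
  rw [l1, l2]
  have l6 : Real.log 4 = 2 * Real.log 2 := by
    rw [show (4:ℝ) = 2^2 by norm_num, Real.log_pow]; push_cast; ring
  rw [l6]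
  have l4 : Real.log (2*(m:ℝ)) = Real.log 2 + Real.log (m:ℝ) :=
    Real.log_mul two_ne_zero hmpos.ne'
  rw [l4]
  -- factorial logs
  have lf1 := log_fact m (by omega)
  have lf2 := log_fact (2*m) (by omega)
  have c2m : ((2*m:ℕ):ℝ) = 2*(m:ℝ) := by push_cast; ring
  rw [c2m, l4] at lf2
  have hmf : (m:ℝ) * (((m-1)!:ℕ):ℝ) = ((m !:ℕ):ℝ) := by
    exact_mod_cast congrArg (Nat.cast : ℕ → ℝ) (Nat.mul_factorial_pred (by omega : m ≠ 0))
  have lfb : Real.log (((m-1)!:ℕ):ℝ) = Real.log ((m !:ℕ):ℝ) - Real.log (m:ℝ) := by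
    rw [← hmf, Real.log_mul hmpos.ne' hfm1.ne']; ring
  rw [lf1, lf2, lfb, lf1]
  -- bounds
  have ru := robbins_log_up (2*m) (by omega)
  have rl := robbins_log_lo m (by omega)
  rw [c2m] at ru
  rw [show 12*(2*(m:ℝ)) = 24*(m:ℝ) by ring] at ru
  have key := key_even_nat m hm
  have l7 : Real.log ((2*(m:ℝ)-1)/(2*(m:ℝ))) =
      Real.log (2*(m:ℝ)-1) - (Real.log 2 + Real.log (m:ℝ)) := by
    rw [Real.log_div hq.ne' hn.ne', Real.log_mul two_ne_zero hmpos.ne']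
  have l8 : Real.log ((m:ℝ)/((m:ℝ)-1)) = Real.log (m:ℝ) - Real.log ((m:ℝ)-1) := by
    rw [Real.log_div hmpos.ne' hw.ne']
  rw [l7, l8] at key
  rw [show 1/(12*(m:ℝ)+1) = (1/2) * (2/(12*(m:ℝ)+1)) by ring] at rl
  linarith [key, ru, rl]

end GRB

open Real

theorem gamma_ratio_bound (T : ℤ) (hT : 2 < T) :
    Real.Gamma (((T : ℝ) + 1) / 2) / Real.Gamma ((T : ℝ) / 2)
      ≤ Real.sqrt ((T : ℝ) / (2 * Real.exp 1)) *
        (1 - 1 / (T : ℝ)) ^ ((T : ℝ) / 2) / (1 - 2 / (T : ℝ)) ^ (((T : ℝ) - 1) / 2) := by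
  obtain ⟨n, rfl⟩ : ∃ n : ℕ, T = (n : ℤ) := ⟨T.toNat, (Int.toNat_of_nonneg (by omega)).symm⟩
  have hn : 3 ≤ n := by exact_mod_cast hT
  rcases Nat.even_or_odd n with ⟨m, hm⟩ | ⟨m, hm⟩
  · have hm2 : 2 ≤ m := by omega
    have hre : ((n:ℤ):ℝ) = 2*(m:ℝ) := by push_cast [hm]; ring
    rw [hre]
    have h := GRB.main_even m hm2
    rw [show 2*(m:ℝ)+1 = 2*(m:ℝ)+1 by rfl] at h
    convert h using 3 <;> ring
  · have hm1 : 1 ≤ m := by omega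
    have hre : ((n:ℤ):ℝ) = 2*(m:ℝ)+1 := by push_cast [hm]; ring
    rw [hre]
    have h := GRB.main_odd m hm1
    convert h using 3 <;> ring
end

section
/- Define f(T) = T·(1 − e^(−1/2)·(1 − 1/T)^(T/2)·(1 − 2/T)^(−(T−1)/2)) for integers T ≥ 3. Then f(T) = 1/4 + O(1/T) as T → ∞; i.e., there exist constants C > 0 and T₀ such that |f(T) − 1/4| ≤ C/T for all T ≥ T₀. -/
set_option maxHeartbeats 1000000

lemma log_taylor2 {x : ℝ} (h0 : 0 ≤ x) (h1 : x < 1) :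
    |Real.log (1 - x) + x + x ^ 2 / 2| ≤ x ^ 3 / (1 - x) := by
  have h := Real.abs_log_sub_add_sum_range_le (by rwa [abs_of_nonneg h0]) 2
  simp only [Finset.sum_range_succ, Finset.sum_range_zero, abs_of_nonneg h0] at h
  convert h using 2 <;> ring

theorem f_asymptotic :
    ∃ C > (0 : ℝ), ∃ T₀ : ℕ, ∀ T : ℕ, T₀ ≤ T → 3 ≤ T →
      |(T : ℝ) * (1 - Real.exp (-(1:ℝ)/2) * (1 - 1 / (T : ℝ)) ^ ((T : ℝ) / 2) *
          (1 - 2 / (T : ℝ)) ^ (-(((T : ℝ) - 1) / 2))) - 1/4| ≤ C / (T : ℝ) := by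
  refine ⟨19, by norm_num, 5, ?_⟩
  intro T hT5 _
  set t : ℝ := (T : ℝ) with ht
  have ht5 : (5:ℝ) ≤ t := by rw [ht]; exact_mod_cast hT5
  have ht0 : (0:ℝ) < t := by linarith
  have htne : t ≠ 0 := ne_of_gt ht0
  have h3 : (1:ℝ)/t ≤ 1/5 := by
    apply div_le_div_of_nonneg_left (by norm_num) (by norm_num) ht5
  have h3' : (2:ℝ)/t ≤ 2/5 := by
    apply div_le_div_of_nonneg_left (by norm_num) (by norm_num) ht5
  have h1t : (0:ℝ) < 1 - 1/t := by linarith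
  have h2t : (0:ℝ) < 1 - 2/t := by linarith
  have h1t' : 1/t < 1 := by linarith
  have h2t' : 2/t < 1 := by linarith
  rw [Real.rpow_def_of_pos h1t, Real.rpow_def_of_pos h2t, ← Real.exp_add, ← Real.exp_add]
  set L : ℝ := -(1:ℝ)/2 + Real.log (1 - 1/t) * (t/2) + Real.log (1 - 2/t) * (-((t-1)/2)) with hL
  set e1 : ℝ := Real.log (1 - 1/t) + 1/t + (1/t)^2/2 with he1
  set e2 : ℝ := Real.log (1 - 2/t) + 2/t + (2/t)^2/2 with he2
  clear_value t L e1 e2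
  have hinv1 : 1/(1 - 1/t) ≤ 2 := by
    rw [div_le_iff₀ h1t]; linarith
  have hinv2 : 1/(1 - 2/t) ≤ 2 := by
    rw [div_le_iff₀ h2t]; linarith
  have hb1 : |e1| ≤ 2 / t^3 := by
    have hlt := log_taylor2 (x := 1/t) (by positivity) h1t'
    have h2 : (1/t)^3 / (1 - 1/t) ≤ 2 / t^3 := by
      have heq : ((1:ℝ)/t)^3 / (1 - 1/t) = (1/t^3) * (1/(1 - 1/t)) := by
        ring
      rw [heq]
      calc (1/t^3) * (1/(1 - 1/t)) ≤ (1/t^3) * 2 := by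
            apply mul_le_mul_of_nonneg_left hinv1 (by positivity)
        _ = 2/t^3 := by ring
    rw [he1]; exact hlt.trans h2
  have hb2 : |e2| ≤ 16 / t^3 := by
    have hlt := log_taylor2 (x := 2/t) (by positivity) h2t'
    have h2 : (2/t)^3 / (1 - 2/t) ≤ 16 / t^3 := by
      have heq : ((2:ℝ)/t)^3 / (1 - 2/t) = (8/t^3) * (1/(1 - 2/t)) := by
        ring
      rw [heq]
      calc (8/t^3) * (1/(1 - 2/t)) ≤ (8/t^3) * 2 := by
            apply mul_le_mul_of_nonneg_left hinv2 (by positivity)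
        _ = 16/t^3 := by ring
    rw [he2]; exact hlt.trans h2
  have hkey : L + 1/(4*t) = e1 * (t/2) - e2 * ((t-1)/2) - 1/t^2 := by
    rw [hL, he1, he2]
    field_simp
    ring
  have habs : |L + 1/(4*t)| ≤ 10 / t^2 := by
    rw [hkey]
    have h1 : |e1 * (t/2)| ≤ 1/t^2 := by
      rw [abs_mul, abs_of_nonneg (by linarith : (0:ℝ) ≤ t/2)]
      calc |e1| * (t/2) ≤ (2/t^3) * (t/2) := by
            apply mul_le_mul_of_nonneg_right hb1 (by linarith)
        _ = 1/t^2 := by field_simp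
    have h2 : |e2 * ((t-1)/2)| ≤ 8/t^2 := by
      rw [abs_mul, abs_of_nonneg (by linarith : (0:ℝ) ≤ (t-1)/2)]
      calc |e2| * ((t-1)/2) ≤ (16/t^3) * (t/2) :=
            mul_le_mul hb2 (by linarith) (by linarith) (by positivity)
        _ = 8/t^2 := by field_simp; ring
    have hinv : |(1:ℝ)/t^2| = 1/t^2 := abs_of_nonneg (by positivity)
    calc |e1 * (t/2) - e2 * ((t-1)/2) - 1/t^2|
        ≤ |e1 * (t/2) - e2 * ((t-1)/2)| + |1/t^2| := abs_sub _ _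
      _ ≤ (|e1 * (t/2)| + |e2 * ((t-1)/2)|) + |1/t^2| :=
          add_le_add_left (abs_sub _ _) _
      _ ≤ 10/t^2 := by
          rw [hinv]
          have hs : (1:ℝ)/t^2 + 8/t^2 + 1/t^2 = 10/t^2 := by ring
          linarith
  have hLbound : |L| ≤ 3/t := by
    have h14 : (1:ℝ)/(4*t) ≤ 1/t := by
      apply div_le_div_of_nonneg_left (by norm_num) ht0 (by linarith)
    have h9 : (10:ℝ)/t^2 ≤ 2/t := by
      rw [div_le_div_iff₀ (by positivity) ht0]; nlinarith
    have habs14 : |(1:ℝ)/(4*t)| = 1/(4*t) := abs_of_nonneg (by positivity)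
    calc |L| = |(L + 1/(4*t)) - 1/(4*t)| := by rw [add_sub_cancel_right]
      _ ≤ |L + 1/(4*t)| + |1/(4*t)| := abs_sub _ _
      _ ≤ 10/t^2 + 1/(4*t) := by rw [habs14]; exact add_le_add habs le_rfl
      _ ≤ 3/t := by
          have hs : (2:ℝ)/t + 1/t = 3/t := by ring
          linarith
  have hL1 : |L| ≤ 1 := by
    have : (3:ℝ)/t ≤ 3/5 := by
      apply div_le_div_of_nonneg_left (by norm_num) (by norm_num) ht5
    linarith
  have hexp := Real.abs_exp_sub_one_sub_id_le hL1
  have key : t * (1 - Real.exp L) - 1/4 =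
      -(t * (Real.exp L - 1 - L)) - t * (L + 1/(4*t)) := by
    field_simp
    ring
  rw [key]
  have step1 : |-(t * (Real.exp L - 1 - L)) - t * (L + 1/(4*t))|
      ≤ |t * (Real.exp L - 1 - L)| + |t * (L + 1/(4*t))| := by
    have h := abs_sub (-(t * (Real.exp L - 1 - L))) (t * (L + 1/(4*t)))
    rwa [abs_neg] at h
  have step2 : |t * (Real.exp L - 1 - L)| ≤ t * (9/t^2) := by
    rw [abs_mul, abs_of_pos ht0]
    have hsq : L^2 ≤ 9/t^2 := by
      have h1 := sq_abs L
      have h2 : |L|^2 ≤ (3/t)^2 := by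
        apply pow_le_pow_left₀ (abs_nonneg L) hLbound
      have h3 : ((3:ℝ)/t)^2 = 9/t^2 := by rw [div_pow]; norm_num
      linarith
    have := hexp.trans hsq
    exact mul_le_mul_of_nonneg_left this (le_of_lt ht0)
  have step3 : |t * (L + 1/(4*t))| ≤ t * (10/t^2) := by
    rw [abs_mul, abs_of_pos ht0]
    exact mul_le_mul_of_nonneg_left habs (le_of_lt ht0)
  have heq9 : t * (9/t^2) = 9/t := by field_simp
  have heq10 : t * (10/t^2) = 10/t := by field_simp
  rw [heq9] at step2
  rw [heq10] at step3
  have : (9:ℝ)/t + 10/t = 19/t := by ring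
  linarith
end

section
/- For all integers T ≥ 3, the quantity f(T) = T·(1 − e^{−1/2}·(1 − 1/T)^{T/2}·(1 − 2/T)^{−(T−1)/2}) is nonnegative. -/
open Real

lemma log_le_cubic {t : ℝ} (ht : 0 ≤ t) :
    Real.log (1 + t) ≤ t - t ^ 2 / 2 + t ^ 3 / 3 := by
  have hD : ∀ x : ℝ, 0 ≤ x →
      HasDerivAt (fun y => y - y ^ 2 / 2 + y ^ 3 / 3 - Real.log (1 + y))
        (x ^ 3 / (1 + x)) x := by
    intro x hx
    have hx1 : (1 : ℝ) + x ≠ 0 := by positivity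
    have hlog : HasDerivAt (fun y : ℝ => Real.log (1 + y)) (1 / (1 + x)) x := by
      have h := (Real.hasDerivAt_log hx1).comp x ((hasDerivAt_id x).const_add 1)
      simpa [one_div, Function.comp_def] using h
    have hpoly : HasDerivAt (fun y : ℝ => y - y ^ 2 / 2 + y ^ 3 / 3)
        (1 - x + x ^ 2) x := by
      have h1 : HasDerivAt (fun y : ℝ => y) 1 x := hasDerivAt_id x
      have h2 : HasDerivAt (fun y : ℝ => y ^ 2 / 2) x x := by
        simpa using (hasDerivAt_pow 2 x).div_const 2
      have h3 : HasDerivAt (fun y : ℝ => y ^ 3 / 3) (x ^ 2) x := by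
        simpa using (hasDerivAt_pow 3 x).div_const 3
      exact (h1.sub h2).add h3
    have h := hpoly.sub hlog
    refine h.congr_deriv ?_
    field_simp
    ring
  have mono : MonotoneOn (fun y => y - y ^ 2 / 2 + y ^ 3 / 3 - Real.log (1 + y))
      (Set.Ici (0 : ℝ)) := by
    apply monotoneOn_of_deriv_nonneg (convex_Ici 0)
    · intro x hx
      exact (hD x hx).continuousAt.continuousWithinAt
    · intro x hx
      rw [interior_Ici] at hx
      exact (hD x hx.le).differentiableAt.differentiableWithinAt
    · intro x hx
      rw [interior_Ici] at hx
      have hx' : (0 : ℝ) < x := hx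
      rw [(hD x hx.le).deriv]
      exact div_nonneg (pow_pos hx' 3).le (by linarith)
  have h0 := mono (Set.self_mem_Ici) (Set.mem_Ici.mpr ht) ht
  simp only [Real.log_one] at h0
  norm_num at h0
  linarith

lemma quad_le_log {u : ℝ} (hu : 0 ≤ u) :
    u - u ^ 2 / 2 ≤ Real.log (1 + u) := by
  have hD : ∀ x : ℝ, 0 ≤ x →
      HasDerivAt (fun y => Real.log (1 + y) - (y - y ^ 2 / 2))
        (x ^ 2 / (1 + x)) x := by
    intro x hx
    have hx1 : (1 : ℝ) + x ≠ 0 := by positivity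
    have hlog : HasDerivAt (fun y : ℝ => Real.log (1 + y)) (1 / (1 + x)) x := by
      have h := (Real.hasDerivAt_log hx1).comp x ((hasDerivAt_id x).const_add 1)
      simpa [one_div, Function.comp_def] using h
    have hpoly : HasDerivAt (fun y : ℝ => y - y ^ 2 / 2) (1 - x) x := by
      have h1 : HasDerivAt (fun y : ℝ => y) 1 x := hasDerivAt_id x
      have h2 : HasDerivAt (fun y : ℝ => y ^ 2 / 2) x x := by
        simpa using (hasDerivAt_pow 2 x).div_const 2
      exact h1.sub h2
    have h := hlog.sub hpoly
    refine h.congr_deriv ?_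
    field_simp
    ring
  have mono : MonotoneOn (fun y => Real.log (1 + y) - (y - y ^ 2 / 2))
      (Set.Ici (0 : ℝ)) := by
    apply monotoneOn_of_deriv_nonneg (convex_Ici 0)
    · intro x hx
      exact (hD x hx).continuousAt.continuousWithinAt
    · intro x hx
      rw [interior_Ici] at hx
      exact (hD x hx.le).differentiableAt.differentiableWithinAt
    · intro x hx
      rw [interior_Ici] at hx
      have hx' : (0 : ℝ) < x := hx
      rw [(hD x hx.le).deriv]
      exact div_nonneg (pow_pos hx' 2).le (by linarith)
  have h0 := mono (Set.self_mem_Ici) (Set.mem_Ici.mpr hu) hu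
  simp only [Real.log_one] at h0
  norm_num at h0
  linarith

lemma key (n : ℝ) (hn : 2 ≤ n) :
    (n + 2) * Real.log (n + 1) - (n + 1) * Real.log n - Real.log (n + 2) ≤ 1 := by
  have hn0 : (0 : ℝ) < n := by linarith
  have hn1 : (0 : ℝ) < n + 1 := by linarith
  have h1 : Real.log (n + 1) - Real.log n ≤ 1 / n - (1 / n) ^ 2 / 2 + (1 / n) ^ 3 / 3 := by
    have e : Real.log (n + 1) - Real.log n = Real.log (1 + 1 / n) := by
      rw [show (1 : ℝ) + 1 / n = (n + 1) / n by field_simp,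
        Real.log_div (by linarith) (by linarith)]
    rw [e]
    exact log_le_cubic (by positivity)
  have h2 : 1 / (n + 1) - (1 / (n + 1)) ^ 2 / 2 ≤ Real.log (n + 2) - Real.log (n + 1) := by
    have e : Real.log (n + 2) - Real.log (n + 1) = Real.log (1 + 1 / (n + 1)) := by
      rw [show (1 : ℝ) + 1 / (n + 1) = (n + 2) / (n + 1) by field_simp; ring,
        Real.log_div (by linarith) (by linarith)]
    rw [e]
    exact quad_le_log (by positivity)
  have key2 : (n + 1) * (1 / n - (1 / n) ^ 2 / 2 + (1 / n) ^ 3 / 3)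
      - (1 / (n + 1) - (1 / (n + 1)) ^ 2 / 2) ≤ 1 := by
    rw [← sub_nonneg]
    have e : 1 - ((n + 1) * (1 / n - (1 / n) ^ 2 / 2 + (1 / n) ^ 3 / 3)
        - (1 / (n + 1) - (1 / (n + 1)) ^ 2 / 2))
        = (3 * n ^ 4 - 2 * n ^ 3 - 3 * n ^ 2 - 3 * n - 2) / (6 * n ^ 3 * (n + 1) ^ 2) := by
      field_simp
      ring
    rw [e]
    apply div_nonneg _ (by positivity)
    nlinarith [sq_nonneg n, sq_nonneg (n - 2)]
  have h1' : (n + 1) * (Real.log (n + 1) - Real.log n)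
      ≤ (n + 1) * (1 / n - (1 / n) ^ 2 / 2 + (1 / n) ^ 3 / 3) :=
    mul_le_mul_of_nonneg_left h1 (by linarith)
  nlinarith [h1', h2, key2]

lemma key1 : 3 * Real.log 2 - Real.log 3 ≤ 1 := by
  have h1 : (3 : ℝ) * Real.log 2 - Real.log 3 = Real.log (8 / 3) := by
    rw [Real.log_div (by norm_num) (by norm_num),
      show (8 : ℝ) = 2 ^ 3 by norm_num, Real.log_pow]
    push_cast
    ring
  rw [h1]
  rw [Real.log_le_iff_le_exp (by norm_num)]
  have := Real.exp_one_gt_d9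
  linarith

theorem f_nonneg (T : ℕ) (hT : 3 ≤ T) :
    0 ≤ (T : ℝ) * (1 - Real.exp (-(1:ℝ)/2) * (1 - 1 / (T : ℝ)) ^ ((T : ℝ) / 2) *
          (1 - 2 / (T : ℝ)) ^ (-(((T : ℝ) - 1) / 2))) := by
  have hs : (3 : ℝ) ≤ (T : ℝ) := by exact_mod_cast hT
  set s : ℝ := (T : ℝ) with hsdef
  have hs0 : (0 : ℝ) < s := by linarith
  have ha : (0 : ℝ) < 1 - 1 / s := by
    rw [sub_pos, div_lt_one hs0]; linarith
  have hb : (0 : ℝ) < 1 - 2 / s := by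
    rw [sub_pos, div_lt_one hs0]; linarith
  apply mul_nonneg hs0.le
  rw [sub_nonneg]
  rw [Real.rpow_def_of_pos ha, Real.rpow_def_of_pos hb, ← Real.exp_add, ← Real.exp_add]
  rw [Real.exp_le_one_iff]
  have e1 : Real.log (1 - 1 / s) = Real.log (s - 1) - Real.log s := by
    rw [show (1 : ℝ) - 1 / s = (s - 1) / s by field_simp,
      Real.log_div (by linarith) (by linarith)]
  have e2 : Real.log (1 - 2 / s) = Real.log (s - 2) - Real.log s := by
    rw [show (1 : ℝ) - 2 / s = (s - 2) / s by field_simp,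
      Real.log_div (by linarith) (by linarith)]
  rw [e1, e2]
  by_cases hT4 : 4 ≤ T
  · have hs4 : (4 : ℝ) ≤ s := by rw [hsdef]; exact_mod_cast hT4
    have hk := key (s - 2) (by linarith)
    have hr1 : s - 2 + 2 = s := by ring
    have hr2 : s - 2 + 1 = s - 1 := by ring
    rw [hr1, hr2] at hk
    nlinarith [hk]
  · have hT3 : T = 3 := by omega
    have hs3 : s = 3 := by rw [hsdef, hT3]; norm_num
    rw [hs3]
    norm_num
    have := key1
    nlinarith [key1]
end
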